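/- Let α : Fin m → ℝ be nonnegative weights with ∑_j α_j = 1 and let p : Fin m → [0,1]. Set z := ∑_j α_j · 2√(p_j(1−p_j)). Then z·√(2 − z²) ≤ ∑_{j,k} α_j α_k · 2√((p_j⋆p_k)(1−(p_j⋆p_k))) ≤ 2z − z². (This is the statement that for any BMS channel W with z = Z(W), one has z√(2−z²) ≤ Z(W Ｓ W) ≤ 2z − z².) -/

import Mathlib

/-- The serial-combination crossover probability `p⋆q := p(1−q) + (1−p)q`. -/
def serial (p q : ℝ) : ℝ := p * (1 - q) + (1 - p) * q

/-- The Bhattacharyya parameter of `BSC(p)`, namely `Z(BSC(p)) := 2√(p(1−p))`. -/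
noncomputable def bhat (p : ℝ) : ℝ := 2 * Real.sqrt (p * (1 - p))

lemma bhat_nonneg (p : ℝ) : 0 ≤ bhat p := by
  unfold bhat; positivity

lemma bhat_eq (p : ℝ) : bhat p = Real.sqrt (4 * (p * (1 - p))) := by
  unfold bhat
  rw [show (4:ℝ) * (p * (1 - p)) = 2^2 * (p * (1 - p)) by ring,
    Real.sqrt_mul (sq_nonneg 2), Real.sqrt_sq (by norm_num : (0:ℝ) ≤ 2)]

lemma bhat_sq {p : ℝ} (h : p ∈ Set.Icc (0:ℝ) 1) : bhat p ^ 2 = 4 * (p * (1 - p)) := by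
  obtain ⟨h0, h1⟩ := h
  rw [bhat_eq, Real.sq_sqrt (by nlinarith)]

lemma bhat_le_one {p : ℝ} (h : p ∈ Set.Icc (0:ℝ) 1) : bhat p ≤ 1 := by
  have h2 := bhat_sq h
  have h0 := bhat_nonneg p
  obtain ⟨ha, hb⟩ := h
  nlinarith [sq_nonneg (2*p - 1)]

lemma bhat_serial {a b : ℝ} (ha : a ∈ Set.Icc (0:ℝ) 1) (hb : b ∈ Set.Icc (0:ℝ) 1) :
    bhat (serial a b) = Real.sqrt (bhat a ^ 2 + bhat b ^ 2 - bhat a ^ 2 * bhat b ^ 2) := by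
  have h1 := bhat_sq ha
  have h2 := bhat_sq hb
  rw [bhat_eq]
  congr 1
  rw [h1, h2]
  unfold serial
  ring

lemma serial_upper {x y : ℝ} (hx0 : 0 ≤ x) (hx1 : x ≤ 1) (hy0 : 0 ≤ y) (hy1 : y ≤ 1) :
    Real.sqrt (x ^ 2 + y ^ 2 - x ^ 2 * y ^ 2) ≤ x + y - x * y := by
  have h : x ^ 2 + y ^ 2 - x ^ 2 * y ^ 2 ≤ (x + y - x * y) ^ 2 := by nlinarith [mul_nonneg hx0 hy0, mul_nonneg (mul_nonneg hx0 hy0) (mul_nonneg (sub_nonneg.2 hx1) (sub_nonneg.2 hy1))]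
  calc Real.sqrt (x ^ 2 + y ^ 2 - x ^ 2 * y ^ 2) ≤ Real.sqrt ((x + y - x * y) ^ 2) :=
        Real.sqrt_le_sqrt h
    _ = x + y - x * y := Real.sqrt_sq (by nlinarith)

lemma jensen_sqrt {m : ℕ} (α x : Fin m → ℝ) (hα : ∀ j, 0 ≤ α j) (hαsum : ∑ j, α j = 1)
    (s y : ℝ) :
    Real.sqrt ((∑ j, α j * x j) ^ 2 * s ^ 2 + y ^ 2) ≤
      ∑ j, α j * Real.sqrt ((x j) ^ 2 * s ^ 2 + y ^ 2) := by
  have h1 : ∀ j, α j * Real.sqrt ((x j) ^ 2 * s ^ 2 + y ^ 2) =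
      ‖(↑(α j * x j * s) + ↑(α j * y) * Complex.I : ℂ)‖ := by
    intro j
    rw [Complex.norm_add_mul_I,
      show (α j * x j * s) ^ 2 + (α j * y) ^ 2 = (α j) ^ 2 * ((x j) ^ 2 * s ^ 2 + y ^ 2) by ring,
      Real.sqrt_mul (sq_nonneg _), Real.sqrt_sq (hα j)]
  have h2 : (↑((∑ j, α j * x j) * s) + ↑y * Complex.I : ℂ) =
      ∑ j, (↑(α j * x j * s) + ↑(α j * y) * Complex.I) := by
    have hc : (∑ j, (α j : ℂ)) = 1 := by exact_mod_cast hαsum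
    rw [Finset.sum_add_distrib]
    congr 1
    · push_cast [Finset.sum_mul]
      rfl
    · rw [← Finset.sum_mul]
      push_cast
      rw [← Finset.sum_mul, hc, one_mul]
  calc Real.sqrt ((∑ j, α j * x j) ^ 2 * s ^ 2 + y ^ 2)
      = ‖(↑((∑ j, α j * x j) * s) + ↑y * Complex.I : ℂ)‖ := by
        rw [Complex.norm_add_mul_I]; ring_nf
    _ = ‖(∑ j, (↑(α j * x j * s) + ↑(α j * y) * Complex.I) : ℂ)‖ := by rw [h2]
    _ ≤ ∑ j, ‖(↑(α j * x j * s) + ↑(α j * y) * Complex.I : ℂ)‖ :=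
        norm_sum_le _ _
    _ = ∑ j, α j * Real.sqrt ((x j) ^ 2 * s ^ 2 + y ^ 2) := by
        exact Finset.sum_congr rfl fun j _ => (h1 j).symm

/-- For a BMS channel `W` with BSC-decomposition `∑ α_j BSC(p_j)` and `z := Z(W)`,
one has `z√(2−z²) ≤ Z(W Ｓ W) ≤ 2z − z²`. -/
theorem stmt_6 (m : ℕ) (α : Fin m → ℝ) (hα : ∀ j, 0 ≤ α j) (hαsum : ∑ j, α j = 1)
    (p : Fin m → ℝ) (hp : ∀ j, p j ∈ Set.Icc (0 : ℝ) 1)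
    (z : ℝ) (hz : z = ∑ j, α j * bhat (p j)) :
    z * Real.sqrt (2 - z ^ 2) ≤ ∑ j, ∑ k, α j * α k * bhat (serial (p j) (p k)) ∧
    ∑ j, ∑ k, α j * α k * bhat (serial (p j) (p k)) ≤ 2 * z - z ^ 2 := by
  have hx0 : ∀ j, 0 ≤ bhat (p j) := fun j => bhat_nonneg _
  have hx1 : ∀ j, bhat (p j) ≤ 1 := fun j => bhat_le_one (hp j)
  have hz0 : 0 ≤ z := hz ▸ Finset.sum_nonneg fun j _ => mul_nonneg (hα j) (hx0 j)
  have hz1 : z ≤ 1 := by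
    rw [hz, ← hαsum]
    exact Finset.sum_le_sum fun j _ => mul_le_of_le_one_right (hα j) (hx1 j)
  constructor
  · -- lower bound
    set t := Real.sqrt (1 - z ^ 2) with ht
    have ht2 : t ^ 2 = 1 - z ^ 2 := Real.sq_sqrt (by nlinarith)
    have step1 : ∀ j, Real.sqrt ((bhat (p j)) ^ 2 * t ^ 2 + z ^ 2) ≤
        ∑ k, α k * bhat (serial (p j) (p k)) := by
      intro j
      set s := Real.sqrt (1 - (bhat (p j)) ^ 2) with hs
      have hs2 : s ^ 2 = 1 - (bhat (p j)) ^ 2 := Real.sq_sqrt (by nlinarith [hx0 j, hx1 j])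
      have hj := jensen_sqrt α (fun k => bhat (p k)) hα hαsum s (bhat (p j))
      calc Real.sqrt ((bhat (p j)) ^ 2 * t ^ 2 + z ^ 2)
          = Real.sqrt ((∑ k, α k * bhat (p k)) ^ 2 * s ^ 2 + (bhat (p j)) ^ 2) := by
            rw [← hz]; congr 1; rw [hs2, ht2]; ring
        _ ≤ ∑ k, α k * Real.sqrt ((bhat (p k)) ^ 2 * s ^ 2 + (bhat (p j)) ^ 2) := hj
        _ = ∑ k, α k * bhat (serial (p j) (p k)) := by
            refine Finset.sum_congr rfl fun k _ => ?_
            rw [bhat_serial (hp j) (hp k)]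
            congr 2
            rw [hs2]; ring
    have step2 := jensen_sqrt α (fun j => bhat (p j)) hα hαsum t z
    calc z * Real.sqrt (2 - z ^ 2)
        = Real.sqrt ((∑ j, α j * bhat (p j)) ^ 2 * t ^ 2 + z ^ 2) := by
          rw [← hz, show z ^ 2 * t ^ 2 + z ^ 2 = z ^ 2 * (2 - z ^ 2) by rw [ht2]; ring,
            Real.sqrt_mul (sq_nonneg z), Real.sqrt_sq hz0]
      _ ≤ ∑ j, α j * Real.sqrt ((bhat (p j)) ^ 2 * t ^ 2 + z ^ 2) := step2
      _ ≤ ∑ j, α j * ∑ k, α k * bhat (serial (p j) (p k)) :=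
          Finset.sum_le_sum fun j _ => mul_le_mul_of_nonneg_left (step1 j) (hα j)
      _ = ∑ j, ∑ k, α j * α k * bhat (serial (p j) (p k)) := by
          refine Finset.sum_congr rfl fun j _ => ?_
          rw [Finset.mul_sum]
          exact Finset.sum_congr rfl fun k _ => by ring
  · -- upper bound
    have hup : ∑ j, ∑ k, α j * α k * bhat (serial (p j) (p k)) ≤
        ∑ j, ∑ k, α j * α k * (bhat (p j) + bhat (p k) - bhat (p j) * bhat (p k)) := by
      refine Finset.sum_le_sum fun j _ => Finset.sum_le_sum fun k _ => ?_
      refine mul_le_mul_of_nonneg_left ?_ (mul_nonneg (hα j) (hα k))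
      rw [bhat_serial (hp j) (hp k)]
      exact serial_upper (hx0 j) (hx1 j) (hx0 k) (hx1 k)
    refine hup.trans (le_of_eq ?_)
    have hinner : ∀ j, ∑ k, α j * α k * (bhat (p j) + bhat (p k) - bhat (p j) * bhat (p k)) =
        α j * (bhat (p j) + z - bhat (p j) * z) := by
      intro j
      have : ∑ k, α j * α k * (bhat (p j) + bhat (p k) - bhat (p j) * bhat (p k)) =
          α j * bhat (p j) * (∑ k, α k) + α j * (∑ k, α k * bhat (p k)) -
            α j * bhat (p j) * (∑ k, α k * bhat (p k)) := by
        rw [Finset.mul_sum, Finset.mul_sum, Finset.mul_sum, ← Finset.sum_add_distrib,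
          ← Finset.sum_sub_distrib]
        exact Finset.sum_congr rfl fun k _ => by ring
      rw [this, hαsum, ← hz]; ring
    rw [Finset.sum_congr rfl fun j _ => hinner j]
    have : ∑ j, α j * (bhat (p j) + z - bhat (p j) * z) =
        (∑ j, α j * bhat (p j)) + (∑ j, α j) * z - (∑ j, α j * bhat (p j)) * z := by
      rw [Finset.sum_mul, Finset.sum_mul, ← Finset.sum_add_distrib, ← Finset.sum_sub_distrib]
      exact Finset.sum_congr rfl fun j _ => by ring
    rw [this, hαsum, ← hz]; ring
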